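/- Let S be a finite nonempty set and d₁ ⊑ d₂ two 1-bounded pseudometrics on S. Let r : S → S satisfy d₂(s, r(s)) = 0 for all s and r(s) = r(s') whenever d₂(s,s') = 0, let ρ(d₁,d₂) = min { d₂(s₁,s₂)/d₁(s₁,s₂) | d₂(s₁,s₂) > 0 } (minimum of the empty set taken to be 1), and let μ = min { d₁(s₁,s₂) | d₁(s₁,s₂) > 0 } (minimum of the empty set taken to be 1). Then for every d₁-nonexpansive f : S → [0,1] and every s ∈ S, f(s) − ρ(d₁,d₂)·f(r(s)) ≤ ((μ+1)/μ) · max_{s₁',s₂' ∈ S} (d₁(s₁',s₂') − d₂(s₁',s₂')). -/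

import Mathlib

open scoped Classical
open Finset

/-- A probabilistic transition system on a finite state set `S`:
`prob s s'` is the probability of a transition from `s` to `s'`;
each row sums to `0` or `1`. -/
structure PTS (S : Type) [Fintype S] where
  prob : S → S → ℝ
  nonneg : ∀ s s', 0 ≤ prob s s'
  le_one : ∀ s s', prob s s' ≤ 1
  sum01 : ∀ s, (∑ s', prob s s') = 0 ∨ (∑ s', prob s s') = 1

/-- The logic `L`: `true`, diamond, conjunction, negation and `φ ⊖ q` with `q ∈ [0,1] ∩ ℚ`. -/
inductive Formula : Type where
  | tt : Formula
  | diam : Formula → Formula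
  | conj : Formula → Formula → Formula
  | neg : Formula → Formula
  | sub : Formula → {q : ℚ // 0 ≤ q ∧ q ≤ 1} → Formula

variable {S : Type} [Fintype S]

/-- The real-valued interpretation `⟦φ⟧_δ` of a formula. -/
noncomputable def interp (M : PTS S) (δ : ℝ) : Formula → S → ℝ
  | .tt, _ => 1
  | .diam φ, s => δ * ∑ s', M.prob s s' * interp M δ φ s'
  | .conj φ ψ, s => min (interp M δ φ s) (interp M δ ψ s)
  | .neg φ, s => 1 - interp M δ φ s
  | .sub φ q, s => max (interp M δ φ s - ((q : ℚ) : ℝ)) 0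

/-- The behavioural distance `d_δ(s₁,s₂) = sup_{φ ∈ L} ⟦φ⟧_δ(s₁) − ⟦φ⟧_δ(s₂)`. -/
noncomputable def pdist (M : PTS S) (δ : ℝ) (s₁ s₂ : S) : ℝ :=
  ⨆ φ : Formula, (interp M δ φ s₁ - interp M δ φ s₂)

/-- `d` is a 1-bounded pseudometric on `S`. -/
def IsPseudo (d : S → S → ℝ) : Prop :=
  (∀ s₁ s₂, 0 ≤ d s₁ s₂ ∧ d s₁ s₂ ≤ 1) ∧ (∀ s, d s s = 0) ∧
  (∀ s₁ s₂, d s₁ s₂ = d s₂ s₁) ∧ (∀ s₁ s₂ s₃, d s₁ s₃ ≤ d s₁ s₂ + d s₂ s₃)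

/-- The order `⊑` on 1-bounded pseudometrics: `d₁ ⊑ d₂` iff `d₁ ≥ d₂` pointwise. -/
def ple (d₁ d₂ : S → S → ℝ) : Prop := ∀ s₁ s₂, d₂ s₁ s₂ ≤ d₁ s₁ s₂

/-- `f : S → [0,1]` is nonexpansive with respect to `d`. -/
def Nonexp (d : S → S → ℝ) (f : S → ℝ) : Prop :=
  (∀ s, 0 ≤ f s ∧ f s ≤ 1) ∧ ∀ s₁ s₂, |f s₁ - f s₂| ≤ d s₁ s₂

/-- The functional `Δ` on 1-bounded pseudometrics. -/
noncomputable def Delta (M : PTS S) (d : S → S → ℝ) (s₁ s₂ : S) : ℝ :=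
  if (∑ s, M.prob s₁ s) = 1 ∧ (∑ s, M.prob s₂ s) = 1 then
    sSup {x : ℝ | ∃ f : S → ℝ, Nonexp d f ∧ x = ∑ s, f s * (M.prob s₁ s - M.prob s₂ s)}
  else if (∑ s, M.prob s₁ s) = 0 ∧ (∑ s, M.prob s₂ s) = 0 then 0
  else 1

/-- `R` is a probabilistic bisimulation on `M`. -/
def IsBisim (M : PTS S) (R : S → S → Prop) : Prop :=
  Equivalence R ∧ ∀ s₁ s₂, R s₁ s₂ → ∀ e : S,
    (∑ s, if R e s then M.prob s₁ s else 0) = (∑ s, if R e s then M.prob s₂ s else 0)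

/-- `s₁` and `s₂` are probabilistic bisimilar. -/
def Bisimilar (M : PTS S) (s₁ s₂ : S) : Prop := ∃ R, IsBisim M R ∧ R s₁ s₂

/-- The modal depth of a formula. -/
def Formula.depth : Formula → ℕ
  | .tt => 0
  | .diam φ => φ.depth + 1
  | .conj φ ψ => max φ.depth ψ.depth
  | .neg φ => φ.depth
  | .sub φ _ => φ.depth

/-- The ratio `ρ(d₁,d₂) = min { d₂(s₁,s₂)/d₁(s₁,s₂) | d₂(s₁,s₂) > 0 }`,
with the minimum of the empty set taken to be `1`. -/
noncomputable def rho (d₁ d₂ : S → S → ℝ) : ℝ :=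
  if {x : ℝ | ∃ s₁ s₂, 0 < d₂ s₁ s₂ ∧ x = d₂ s₁ s₂ / d₁ s₁ s₂}.Nonempty
  then sInf {x : ℝ | ∃ s₁ s₂, 0 < d₂ s₁ s₂ ∧ x = d₂ s₁ s₂ / d₁ s₁ s₂} else 1

/-- `μ = min { d(s₁,s₂) | d(s₁,s₂) > 0 }`, with the minimum of the empty set taken to be `1`. -/
noncomputable def muMin (d : S → S → ℝ) : ℝ :=
  if {x : ℝ | ∃ s₁ s₂, 0 < d s₁ s₂ ∧ x = d s₁ s₂}.Nonempty
  then sInf {x : ℝ | ∃ s₁ s₂, 0 < d s₁ s₂ ∧ x = d s₁ s₂} else 1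

/-- The iterates `d⁰ = ⊤`, `d^{n+1} = Δ(d^n)`. -/
noncomputable def iterd (M : PTS S) : ℕ → S → S → ℝ
  | 0 => fun _ _ => 0
  | n + 1 => Delta M (iterd M n)

/-- The termination probabilities `τₙ`. -/
noncomputable def term (M : PTS S) : ℕ → S → ℝ
  | 0, _ => 0
  | n + 1, s => if (∑ s', M.prob s s') = 0 then 1 else ∑ s', M.prob s s' * term M n s'

/-- bounding `f − g_f` from above:
`f(s) − ρ(d₁,d₂)·f(r(s)) ≤ ((μ+1)/μ)·max_{s₁',s₂'} (d₁(s₁',s₂') − d₂(s₁',s₂'))`. -/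
theorem stmt14 (S : Type) [Fintype S] [Nonempty S] (d₁ d₂ : S → S → ℝ)
    (h₁ : IsPseudo d₁) (h₂ : IsPseudo d₂) (hle : ple d₁ d₂)
    (r : S → S) (hr₁ : ∀ s, d₂ s (r s) = 0)
    (hr₂ : ∀ s s', d₂ s s' = 0 → r s = r s')
    (f : S → ℝ) (hf : Nonexp d₁ f) (s : S) :
    f s - rho d₁ d₂ * f (r s)
      ≤ ((muMin d₁ + 1) / muMin d₁) * ⨆ p : S × S, (d₁ p.1 p.2 - d₂ p.1 p.2) := by
  set M : ℝ := ⨆ p : S × S, (d₁ p.1 p.2 - d₂ p.1 p.2) with hMdef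
  have hbdd : BddAbove (Set.range fun p : S × S => d₁ p.1 p.2 - d₂ p.1 p.2) :=
    Set.Finite.bddAbove (Set.finite_range _)
  have hMle : ∀ a b : S, d₁ a b - d₂ a b ≤ M := fun a b =>
    le_ciSup hbdd (⟨a, b⟩ : S × S)
  have hM0 : 0 ≤ M := by
    have := hMle s s
    rw [h₁.2.1 s, h₂.2.1 s] at this
    linarith
  set μ : ℝ := muMin d₁ with hμdef
  -- μ > 0
  have hfin : ({x : ℝ | ∃ s₁ s₂, 0 < d₁ s₁ s₂ ∧ x = d₁ s₁ s₂}).Finite := by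
    apply Set.Finite.subset (Set.finite_range fun p : S × S => d₁ p.1 p.2)
    rintro x ⟨a, b, _, rfl⟩
    exact ⟨⟨a, b⟩, rfl⟩
  have hμpos : 0 < μ := by
    rw [hμdef, muMin]
    split_ifs with hne
    · have := Set.Nonempty.csInf_mem hne hfin
      obtain ⟨a, b, hab, heq⟩ := this
      rw [heq]; exact hab
    · norm_num
  have hμle : ∀ a b : S, 0 < d₁ a b → μ ≤ d₁ a b := by
    intro a b hab
    rw [hμdef, muMin]
    have hne : ({x : ℝ | ∃ s₁ s₂, 0 < d₁ s₁ s₂ ∧ x = d₁ s₁ s₂}).Nonempty :=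
      ⟨d₁ a b, a, b, hab, rfl⟩
    rw [if_pos hne]
    exact csInf_le (Set.Finite.bddBelow hfin) ⟨a, b, hab, rfl⟩
  -- ρ bounds
  have hρle1 : rho d₁ d₂ ≤ 1 := by
    rw [rho]
    split_ifs with hne
    · obtain ⟨x, a, b, hab, hx⟩ := hne
      have hbb : BddBelow {x : ℝ | ∃ s₁ s₂, 0 < d₂ s₁ s₂ ∧ x = d₂ s₁ s₂ / d₁ s₁ s₂} := by
        refine ⟨0, ?_⟩
        rintro y ⟨a', b', hab', rfl⟩
        exact div_nonneg (le_of_lt hab') (h₁.1 a' b').1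
      have hmem : (d₂ a b / d₁ a b) ∈
          {x : ℝ | ∃ s₁ s₂, 0 < d₂ s₁ s₂ ∧ x = d₂ s₁ s₂ / d₁ s₁ s₂} := ⟨a, b, hab, rfl⟩
      refine le_trans (csInf_le hbb hmem) ?_
      have h1 : 0 < d₁ a b := lt_of_lt_of_le hab (hle a b)
      exact div_le_one_of_le₀ (hle a b) (le_of_lt h1)
    · exact le_refl 1
  have hρge : 1 - M / μ ≤ rho d₁ d₂ := by
    rw [rho]
    split_ifs with hne
    · apply le_csInf hne
      rintro x ⟨a, b, hab, rfl⟩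
      have h1 : 0 < d₁ a b := lt_of_lt_of_le hab (hle a b)
      have hμab : μ ≤ d₁ a b := hμle a b h1
      have hMab : d₁ a b - d₂ a b ≤ M := hMle a b
      have key : (d₁ a b - d₂ a b) / d₁ a b ≤ M / μ := by
        apply div_le_div₀ (by linarith) hMab hμpos hμab
      have : d₂ a b / d₁ a b = 1 - (d₁ a b - d₂ a b) / d₁ a b := by
        field_simp
        ring
      rw [this]; linarith
    · have : 0 ≤ M / μ := div_nonneg hM0 (le_of_lt hμpos)
      linarith
  -- assemble
  have hfs : f s - f (r s) ≤ M := by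
    have h1 : |f s - f (r s)| ≤ d₁ s (r s) := hf.2 s (r s)
    have h2 : d₁ s (r s) - d₂ s (r s) ≤ M := hMle s (r s)
    rw [hr₁ s] at h2
    calc f s - f (r s) ≤ |f s - f (r s)| := le_abs_self _
      _ ≤ d₁ s (r s) := h1
      _ ≤ M := by linarith
  have hfr0 : 0 ≤ f (r s) := (hf.1 (r s)).1
  have hfr1 : f (r s) ≤ 1 := (hf.1 (r s)).2
  have hterm : (1 - rho d₁ d₂) * f (r s) ≤ M / μ := by
    calc (1 - rho d₁ d₂) * f (r s) ≤ (M / μ) * 1 :=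
          mul_le_mul (by linarith) hfr1 hfr0 (div_nonneg hM0 (le_of_lt hμpos))
      _ = M / μ := mul_one _
  have : f s - rho d₁ d₂ * f (r s) = (f s - f (r s)) + (1 - rho d₁ d₂) * f (r s) := by
    ring
  rw [this]
  have : ((μ + 1) / μ) * M = M + M / μ := by
    field_simp
  rw [this]
  linarith
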